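/- arXiv:1003.4855 — 2 statements merged into one kernel-verified Lean document; each statement's English description precedes it below -/
import Mathlib

section
/- Let Π = {A₁,...,A_k} be a resolving partition of a connected graph G₁ and S = {u₁,...,u_t} a resolving set of a connected graph G₂. Then the partition of V(G₁)×V(G₂) consisting of the sets A₁×{u₁}, A₂×{u₁}, ..., A_k×{u₁}, A₁×{u₂}, ..., A₁×{u_t}, together with the set C of all remaining vertices, is a resolving partition of G₁ × G₂. -/
open SimpleGraph

/-- Distance from a vertex to a set of vertices: `min {d(v,x) : x ∈ P}`. -/
noncomputable def distToSet {V : Type*} (G : SimpleGraph V) (v : V) (P : Set V) : ℕ :=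
  sInf ((G.dist v) '' P)

/-- `S` is a resolving set of `G`. -/
def IsResolvingSet {V : Type*} (G : SimpleGraph V) (S : Set V) : Prop :=
  ∀ u v : V, u ≠ v → ∃ w ∈ S, G.dist u w ≠ G.dist v w

/-- The metric dimension of `G`. -/
noncomputable def metricDim {V : Type*} (G : SimpleGraph V) : ℕ :=
  sInf {n | ∃ S : Finset V, S.card = n ∧ IsResolvingSet G ↑S}

/-- `Π` is a resolving partition of `G`: a partition of the vertex set such that
distinct vertices have distinct vectors of distances to the parts. -/
def IsResolvingPartition {V : Type*} (G : SimpleGraph V) (Pi : Set (Set V)) : Prop :=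
  Setoid.IsPartition Pi ∧
    ∀ u v : V, u ≠ v → ∃ P ∈ Pi, distToSet G u P ≠ distToSet G v P

/-- The partition dimension of `G`. -/
noncomputable def partitionDim {V : Type*} (G : SimpleGraph V) : ℕ :=
  sInf {n | ∃ Pi : Finset (Set V), Pi.card = n ∧ IsResolvingPartition G ↑Pi}

/-- Any walk in the box product is at least as long as the sum of the component distances. -/
lemma boxProd_walk_length_ge {V₁ V₂ : Type*} {G : SimpleGraph V₁} {H : SimpleGraph V₂}
    (hG : G.Connected) (hH : H.Connected) {x y : V₁ × V₂} (w : (G.boxProd H).Walk x y) :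
    G.dist x.1 y.1 + H.dist x.2 y.2 ≤ w.length := by
  induction w with
  | nil => simp
  | @cons x z y h w ih =>
    rw [Walk.length_cons]
    rcases h with ⟨hG', he⟩ | ⟨hH', he⟩
    · have h1 : G.dist x.1 y.1 ≤ G.dist x.1 z.1 + G.dist z.1 y.1 := hG.dist_triangle
      have h2 : G.dist x.1 z.1 = 1 := dist_eq_one_iff_adj.mpr hG'
      have h3 : H.dist x.2 y.2 = H.dist z.2 y.2 := by rw [he]
      omega
    · have h1 : H.dist x.2 y.2 ≤ H.dist x.2 z.2 + H.dist z.2 y.2 := hH.dist_triangle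
      have h2 : H.dist x.2 z.2 = 1 := dist_eq_one_iff_adj.mpr hH'
      have h3 : G.dist x.1 y.1 = G.dist z.1 y.1 := by rw [he]
      omega

/-- Distance in the box product is the sum of the component distances. -/
lemma boxProd_dist' {V₁ V₂ : Type*} {G : SimpleGraph V₁} {H : SimpleGraph V₂}
    (hG : G.Connected) (hH : H.Connected) (x y : V₁ × V₂) :
    (G.boxProd H).dist x y = G.dist x.1 y.1 + H.dist x.2 y.2 := by
  apply le_antisymm
  · obtain ⟨w₁, h₁⟩ := hG.exists_walk_length_eq_dist x.1 y.1
    obtain ⟨w₂, h₂⟩ := hH.exists_walk_length_eq_dist x.2 y.2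
    have := dist_le ((w₁.boxProdLeft H x.2).append (w₂.boxProdRight G y.1))
    have e1 : (w₁.boxProdLeft H x.2).length = w₁.length := Walk.length_map _ _
    have e2 : (w₂.boxProdRight G y.1).length = w₂.length := Walk.length_map _ _
    rw [Walk.length_append, e1, e2, h₁, h₂] at this
    exact this
  · obtain ⟨w, hw⟩ := (hG.boxProd hH).exists_walk_length_eq_dist x y
    rw [← hw]; exact boxProd_walk_length_ge hG hH w

lemma sInf_image_add' {s : Set ℕ} (hs : s.Nonempty) (c : ℕ) :
    sInf ((· + c) '' s) = sInf s + c := by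
  apply le_antisymm
  · exact Nat.sInf_le ⟨sInf s, Nat.sInf_mem hs, rfl⟩
  · apply le_csInf (hs.image _)
    rintro _ ⟨x, hx, rfl⟩
    exact Nat.add_le_add_right (Nat.sInf_le hx) c

lemma distToSet_prod' {V₁ V₂ : Type*} {G : SimpleGraph V₁} {H : SimpleGraph V₂}
    (hG : G.Connected) (hH : H.Connected) (a : V₁) (b : V₂) {P : Set V₁}
    (hP : P.Nonempty) (w : V₂) :
    distToSet (G.boxProd H) (a, b) (P ×ˢ ({w} : Set V₂)) = distToSet G a P + H.dist b w := by
  unfold distToSet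
  have himg : (G.boxProd H).dist (a, b) '' (P ×ˢ ({w} : Set V₂))
      = (· + H.dist b w) '' ((G.dist a) '' P) := by
    ext n
    constructor
    · rintro ⟨⟨p, q⟩, ⟨hp, hq⟩, rfl⟩
      rcases hq with rfl
      exact ⟨G.dist a p, ⟨p, hp, rfl⟩, (boxProd_dist' hG hH (a, b) (p, q)).symm⟩
    · rintro ⟨_, ⟨p, hp, rfl⟩, rfl⟩
      exact ⟨(p, w), ⟨hp, rfl⟩, boxProd_dist' hG hH (a, b) (p, w)⟩
  rw [himg, sInf_image_add' (hP.image _)]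

lemma distToSet_eq_zero_of_mem' {V : Type*} {G : SimpleGraph V} {a : V} {P : Set V}
    (h : a ∈ P) : distToSet G a P = 0 :=
  Nat.sInf_eq_zero.mpr (Or.inl ⟨a, h, SimpleGraph.dist_self⟩)

theorem stmt_6 {V₁ V₂ : Type*} (G₁ : SimpleGraph V₁) (G₂ : SimpleGraph V₂)
    (hG₁ : G₁.Connected) (hG₂ : G₂.Connected) {k t : ℕ}
    (A : Fin (k + 1) → Set V₁) (u : Fin (t + 1) → V₂)
    (hA : IsResolvingPartition G₁ (Set.range A))
    (hu : IsResolvingSet G₂ (Set.range u)) :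
    IsResolvingPartition (G₁.boxProd G₂)
      (((Set.range fun i => A i ×ˢ ({u 0} : Set V₂)) ∪
        (Set.range fun j => A 0 ×ˢ ({u j} : Set V₂)) ∪
        {Set.univ \ ((Set.univ ×ˢ ({u 0} : Set V₂)) ∪
          (A 0 ×ˢ (Set.range u : Set V₂)))}) \ {∅}) := by
  classical
  obtain ⟨⟨hne_empty, hpart⟩, hres⟩ := hA
  have hAne : ∀ i, (A i).Nonempty := fun i =>
    Set.nonempty_iff_ne_empty.mpr fun h => hne_empty (h ▸ ⟨i, rfl⟩)
  set C : Set (V₁ × V₂) := Set.univ \ ((Set.univ ×ˢ ({u 0} : Set V₂)) ∪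
      (A 0 ×ˢ (Set.range u : Set V₂))) with hCdef
  set Pi : Set (Set (V₁ × V₂)) := ((Set.range fun i => A i ×ˢ ({u 0} : Set V₂)) ∪
        (Set.range fun j => A 0 ×ˢ ({u j} : Set V₂)) ∪ {C}) \ {∅} with hPidef
  have hmemR1 : ∀ i : Fin (k + 1), (A i ×ˢ ({u 0} : Set V₂)) ∈ Pi := fun i =>
    ⟨Or.inl (Or.inl ⟨i, rfl⟩),
      fun h => ((hAne i).prod (Set.singleton_nonempty (u 0))).ne_empty h⟩
  have hmemR2 : ∀ j : Fin (t + 1), (A 0 ×ˢ ({u j} : Set V₂)) ∈ Pi := fun j =>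
    ⟨Or.inl (Or.inr ⟨j, rfl⟩),
      fun h => ((hAne 0).prod (Set.singleton_nonempty (u j))).ne_empty h⟩
  constructor
  · constructor
    · rintro ⟨-, h2⟩; exact h2 rfl
    · rintro ⟨a, b⟩
      obtain ⟨Pa, ⟨⟨ia, hia⟩, haPa⟩, huniq⟩ := hpart a
      subst hia
      by_cases hb0 : b = u 0
      · refine ⟨A ia ×ˢ ({u 0} : Set V₂), ⟨hmemR1 ia, ⟨haPa, hb0⟩⟩, ?_⟩
        rintro Q ⟨⟨hQmem, hQne⟩, hxQ⟩
        rcases hQmem with (⟨i, hQ⟩ | ⟨j, hQ⟩) | hQ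
        · subst hQ
          show A i ×ˢ ({u 0} : Set V₂) = A ia ×ˢ ({u 0} : Set V₂)
          rw [huniq (A i) ⟨⟨i, rfl⟩, hxQ.1⟩]
        · subst hQ
          show A 0 ×ˢ ({u j} : Set V₂) = A ia ×ˢ ({u 0} : Set V₂)
          have hbj : b = u j := hxQ.2
          rw [huniq (A 0) ⟨⟨0, rfl⟩, hxQ.1⟩, ← hbj, hb0]
        · subst hQ
          exact absurd (Or.inl ⟨Set.mem_univ a, hb0⟩) hxQ.2
      · by_cases hbr : a ∈ A 0 ∧ b ∈ Set.range u
        · obtain ⟨ha0, j, hj⟩ := hbr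
          refine ⟨A 0 ×ˢ ({u j} : Set V₂), ⟨hmemR2 j, ⟨ha0, hj.symm⟩⟩, ?_⟩
          rintro Q ⟨⟨hQmem, hQne⟩, hxQ⟩
          rcases hQmem with (⟨i, hQ⟩ | ⟨j', hQ⟩) | hQ
          · subst hQ
            exact absurd hxQ.2 hb0
          · subst hQ
            show A 0 ×ˢ ({u j'} : Set V₂) = A 0 ×ˢ ({u j} : Set V₂)
            have hbj' : b = u j' := hxQ.2
            rw [← hbj', ← hj]
          · subst hQ
            exact absurd (Or.inr ⟨ha0, ⟨j, hj⟩⟩) hxQ.2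
        · have hnot : (a, b) ∉ ((Set.univ ×ˢ ({u 0} : Set V₂)) ∪
              (A 0 ×ˢ (Set.range u : Set V₂))) := by
            rintro (⟨-, hb⟩ | ⟨ha, hb⟩)
            · exact hb0 hb
            · exact hbr ⟨ha, hb⟩
          have hxC : (a, b) ∈ C := ⟨Set.mem_univ _, hnot⟩
          refine ⟨C, ⟨⟨Or.inr rfl, fun h => Set.notMem_empty (a, b) (h ▸ hxC)⟩, hxC⟩, ?_⟩
          rintro Q ⟨⟨hQmem, hQne⟩, hxQ⟩
          rcases hQmem with (⟨i, hQ⟩ | ⟨j', hQ⟩) | hQ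
          · subst hQ
            exact absurd hxQ.2 hb0
          · subst hQ
            exact absurd ⟨hxQ.1, ⟨j', (hxQ.2 : b = u j').symm⟩⟩ hbr
          · exact hQ
  · rintro ⟨a, b⟩ ⟨c, d⟩ hne
    by_contra hcon
    push_neg at hcon
    have E : ∀ i, distToSet G₁ a (A i) + G₂.dist b (u 0)
        = distToSet G₁ c (A i) + G₂.dist d (u 0) := fun i => by
      have h := hcon _ (hmemR1 i)
      rwa [distToSet_prod' hG₁ hG₂ _ _ (hAne i) _,
        distToSet_prod' hG₁ hG₂ _ _ (hAne i) _] at h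
    have F : ∀ j, distToSet G₁ a (A 0) + G₂.dist b (u j)
        = distToSet G₁ c (A 0) + G₂.dist d (u j) := fun j => by
      have h := hcon _ (hmemR2 j)
      rwa [distToSet_prod' hG₁ hG₂ _ _ (hAne 0) _,
        distToSet_prod' hG₁ hG₂ _ _ (hAne 0) _] at h
    obtain ⟨Pa, ⟨⟨ia, hia⟩, haPa⟩, -⟩ := hpart a
    subst hia
    obtain ⟨Pc, ⟨⟨ic, hic⟩, hcPc⟩, -⟩ := hpart c
    subst hic
    have h0a : distToSet G₁ a (A ia) = 0 := distToSet_eq_zero_of_mem' haPa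
    have h0c : distToSet G₁ c (A ic) = 0 := distToSet_eq_zero_of_mem' hcPc
    have hEa := E ia
    have hEc := E ic
    rw [h0a] at hEa
    rw [h0c] at hEc
    have heq : G₂.dist b (u 0) = G₂.dist d (u 0) := by omega
    by_cases hac : a = c
    · subst hac
      have hbd : b ≠ d := fun h => hne (by rw [h])
      obtain ⟨w, ⟨j, rfl⟩, hw⟩ := hu b d hbd
      exact hw (by have := F j; omega)
    · obtain ⟨P, ⟨i, rfl⟩, hP⟩ := hres a c hac
      exact hP (by have := E i; omega)
end

section
/- For any connected graph G and any n ≥ 2, pd(G × K_n) ≤ pd(G) + n − 1, where K_n is the complete graph on n vertices. -/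
open SimpleGraph

/-! ### Auxiliary lemmas -/

lemma aux_walk_lower {α β : Type*} {G : SimpleGraph α} {H : SimpleGraph β}
    (hG : G.Connected) (hH : H.Connected) :
    ∀ {x y : α × β} (w : (G.boxProd H).Walk x y),
      G.dist x.1 y.1 + H.dist x.2 y.2 ≤ w.length := by
  intro x y w
  induction w with
  | nil => simp
  | @cons x z y h p ih =>
    rcases boxProd_adj.mp h with ⟨hA, he⟩ | ⟨hA, he⟩
    · have h1 : G.dist x.1 z.1 ≤ 1 := by
        simpa using G.dist_le hA.toWalk
      have h2 : G.dist x.1 y.1 ≤ G.dist x.1 z.1 + G.dist z.1 y.1 := hG.dist_triangle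
      have : H.dist x.2 y.2 = H.dist z.2 y.2 := by rw [he]
      simp only [SimpleGraph.Walk.length_cons]
      omega
    · have h1 : H.dist x.2 z.2 ≤ 1 := by
        simpa using H.dist_le hA.toWalk
      have h2 : H.dist x.2 y.2 ≤ H.dist x.2 z.2 + H.dist z.2 y.2 := hH.dist_triangle
      have : G.dist x.1 y.1 = G.dist z.1 y.1 := by rw [he]
      simp only [SimpleGraph.Walk.length_cons]
      omega

lemma aux_boxProd_dist {α β : Type*} {G : SimpleGraph α} {H : SimpleGraph β}
    (hG : G.Connected) (hH : H.Connected) (u v : α) (a b : β) :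
    (G.boxProd H).dist (u, a) (v, b) = G.dist u v + H.dist a b := by
  apply le_antisymm
  · obtain ⟨p, hp⟩ := hG.exists_walk_length_eq_dist u v
    obtain ⟨q, hq⟩ := hH.exists_walk_length_eq_dist a b
    have := (G.boxProd H).dist_le ((p.boxProdLeft H a).append (q.boxProdRight G v))
    have hl : ((p.boxProdLeft H a).append (q.boxProdRight G v)).length = G.dist u v + H.dist a b := by
      have h1 : (p.boxProdLeft H a).length = p.length := SimpleGraph.Walk.length_map _ _
      have h2 : (q.boxProdRight G v).length = q.length := SimpleGraph.Walk.length_map _ _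
      rw [SimpleGraph.Walk.length_append, h1, h2, hp, hq]
    exact hl ▸ this
  · obtain ⟨w, hw⟩ := (hG.boxProd hH).exists_walk_length_eq_dist (u, a) (v, b)
    rw [← hw]
    exact aux_walk_lower hG hH w

lemma aux_sInf_add (s : Set ℕ) (hs : s.Nonempty) (c : ℕ) :
    sInf ((· + c) '' s) = sInf s + c := by
  apply le_antisymm
  · exact Nat.sInf_le ⟨sInf s, Nat.sInf_mem hs, rfl⟩
  · apply le_csInf (hs.image _)
    rintro _ ⟨x, hx, rfl⟩
    exact Nat.add_le_add_right (Nat.sInf_le hx) c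

lemma aux_top_dist {n : ℕ} (a b : Fin n) :
    (⊤ : SimpleGraph (Fin n)).dist a b = if a = b then 0 else 1 := by
  split_ifs with h
  · simp [h]
  · exact dist_eq_one_iff_adj.mpr h

section prod
variable {V : Type*} {n : ℕ} (G : SimpleGraph V)

lemma aux_dist' (hG : G.Connected) (u v : V) (a b : Fin n) :
    (G.boxProd (⊤ : SimpleGraph (Fin n))).dist (u, a) (v, b)
      = G.dist u v + if a = b then 0 else 1 := by
  have : Nonempty (Fin n) := ⟨a⟩
  rw [aux_boxProd_dist hG connected_top, aux_top_dist]

lemma aux_col (hG : G.Connected) (u : V) (a j : Fin n) :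
    distToSet (G.boxProd (⊤ : SimpleGraph (Fin n))) (u, a) (Set.univ ×ˢ {j})
      = if a = j then 0 else 1 := by
  have hmem : (G.boxProd (⊤ : SimpleGraph (Fin n))).dist (u, a) (u, j)
      ∈ ((G.boxProd (⊤ : SimpleGraph (Fin n))).dist (u, a)) '' (Set.univ ×ˢ {j}) :=
    Set.mem_image_of_mem _ (by simp)
  apply le_antisymm
  · apply Nat.sInf_le
    refine ⟨(u, j), by simp, ?_⟩
    rw [aux_dist' G hG]
    simp
  · apply le_csInf ⟨_, hmem⟩
    rintro _ ⟨⟨v, b⟩, hvb, rfl⟩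
    simp only [Set.mem_prod, Set.mem_singleton_iff] at hvb
    rw [hvb.2, aux_dist' G hG]
    omega

lemma aux_row (hG : G.Connected) (u : V) (a z : Fin n) (P : Set V) (hP : P.Nonempty) :
    distToSet (G.boxProd (⊤ : SimpleGraph (Fin n))) (u, a) (P ×ˢ {z})
      = distToSet G u P + if a = z then 0 else 1 := by
  have himg : (((G.boxProd (⊤ : SimpleGraph (Fin n))).dist (u, a)) '' (P ×ˢ {z}))
      = (· + if a = z then 0 else 1) '' ((G.dist u) '' P) := by
    ext m
    constructor
    · rintro ⟨⟨v, b⟩, hvb, rfl⟩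
      simp only [Set.mem_prod, Set.mem_singleton_iff] at hvb
      obtain ⟨hv, rfl⟩ := hvb
      exact ⟨G.dist u v, ⟨v, hv, rfl⟩, (aux_dist' G hG u v a b).symm⟩
    · rintro ⟨_, ⟨v, hv, rfl⟩, rfl⟩
      exact ⟨(v, z), by simp [hv], aux_dist' G hG u v a z⟩
  rw [distToSet, himg, aux_sInf_add _ (hP.image _)]
  rfl

end prod

/-- Every connected graph on a finite vertex type has a resolving partition
(the partition into singletons). -/
lemma aux_exists_resolving {V : Type*} [Fintype V] (G : SimpleGraph V) (hG : G.Connected) :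
    ∃ Pi : Finset (Set V), IsResolvingPartition G ↑Pi := by
  classical
  refine ⟨Finset.univ.image (fun v => ({v} : Set V)), ⟨?_, ?_⟩, ?_⟩
  · intro h
    simp only [Finset.coe_image, Finset.coe_univ, Set.image_univ, Set.mem_range] at h
    obtain ⟨v, hv⟩ := h
    exact (Set.singleton_nonempty v).ne_empty hv
  · intro a
    refine ⟨{a}, ⟨by simp, rfl⟩, ?_⟩
    rintro P ⟨hP, haP⟩
    simp only [Finset.coe_image, Finset.coe_univ, Set.image_univ, Set.mem_range] at hP
    obtain ⟨v, rfl⟩ := hP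
    simp only [Set.mem_singleton_iff] at haP
    rw [haP]
  · intro u v huv
    refine ⟨{u}, by simp, ?_⟩
    have h1 : distToSet G u {u} = 0 := by simp [distToSet]
    have h2 : distToSet G v {u} ≠ 0 := by
      have : G.dist v u ≠ 0 := Nat.pos_iff_ne_zero.mp (hG.pos_dist_of_ne (Ne.symm huv))
      simpa [distToSet] using this
    omega

theorem stmt_8 {V : Type*} [Fintype V] (G : SimpleGraph V) (hG : G.Connected)
    (n : ℕ) (hn : 2 ≤ n) :
    partitionDim (G.boxProd (⊤ : SimpleGraph (Fin n))) ≤ partitionDim G + (n - 1) := by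
  classical
  have hVne : Nonempty V := hG.nonempty
  obtain ⟨v₀⟩ := hVne
  have : Nonempty (Fin n) := ⟨⟨0, by omega⟩⟩
  set z : Fin n := ⟨0, by omega⟩ with hz
  -- extract an optimal resolving partition of G
  have hne : {m | ∃ Pi : Finset (Set V), Pi.card = m ∧ IsResolvingPartition G ↑Pi}.Nonempty := by
    obtain ⟨Pi, hPi⟩ := aux_exists_resolving G hG
    exact ⟨Pi.card, Pi, rfl, hPi⟩
  obtain ⟨Pi, hcard, hPart, hres⟩ :=
    Nat.sInf_mem (s := {m | ∃ Pi : Finset (Set V), Pi.card = m ∧ IsResolvingPartition G ↑Pi}) hne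
  have hPne : ∀ P ∈ Pi, (P : Set V).Nonempty := by
    intro P hP
    rcases Set.eq_empty_or_nonempty P with h | h
    · exact absurd (Finset.mem_coe.mpr (h ▸ hP)) hPart.1
    · exact h
  -- construct the partition of the product
  set cols : Finset (Set (V × Fin n)) :=
    (Finset.univ.erase z).image (fun j => (Set.univ ×ˢ {j} : Set (V × Fin n))) with hcols
  set rows : Finset (Set (V × Fin n)) :=
    Pi.image (fun P => (P ×ˢ {z} : Set (V × Fin n))) with hrows
  have hcolinj : Set.InjOn (fun j : Fin n => (Set.univ ×ˢ {j} : Set (V × Fin n)))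
      ↑(Finset.univ.erase z) := by
    intro i _ j _ hij
    replace hij : (Set.univ ×ˢ {i} : Set (V × Fin n)) = Set.univ ×ˢ {j} := hij
    have : (v₀, i) ∈ (Set.univ ×ˢ {j} : Set (V × Fin n)) := by
      rw [← hij]; simp
    simpa using this.2
  have hrowinj : Set.InjOn (fun P : Set V => (P ×ˢ {z} : Set (V × Fin n))) ↑Pi := by
    intro P _ Q _ hPQ
    replace hPQ : (P ×ˢ {z} : Set (V × Fin n)) = Q ×ˢ {z} := hPQ
    ext x
    constructor
    · intro hx
      have : (x, z) ∈ (Q ×ˢ {z} : Set (V × Fin n)) := by rw [← hPQ]; exact ⟨hx, rfl⟩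
      exact this.1
    · intro hx
      have : (x, z) ∈ (P ×ˢ {z} : Set (V × Fin n)) := by rw [hPQ]; exact ⟨hx, rfl⟩
      exact this.1
  have hdisj : Disjoint cols rows := by
    rw [Finset.disjoint_left]
    rintro S hS hS'
    simp only [hcols, hrows, Finset.mem_image, Finset.mem_erase, Finset.mem_univ, and_true] at hS hS'
    obtain ⟨j, hj, rfl⟩ := hS
    obtain ⟨P, hP, hPeq⟩ := hS'
    have : (v₀, j) ∈ (P ×ˢ {z} : Set (V × Fin n)) := by rw [hPeq]; simp
    exact hj this.2
  have hcardQ : (cols ∪ rows).card = (n - 1) + Pi.card := by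
    rw [Finset.card_union_of_disjoint hdisj, Finset.card_image_of_injOn hcolinj,
      Finset.card_image_of_injOn hrowinj]
    congr 1
    rw [Finset.card_erase_of_mem (Finset.mem_univ z)]
    simp
  -- membership description
  have hmemQ : ∀ S : Set (V × Fin n), S ∈ cols ∪ rows ↔
      (∃ j : Fin n, j ≠ z ∧ S = Set.univ ×ˢ {j}) ∨ (∃ P ∈ Pi, S = P ×ˢ {z}) := by
    intro S
    simp only [Finset.mem_union, hcols, hrows, Finset.mem_image, Finset.mem_erase,
      Finset.mem_univ, and_true]
    constructor
    · rintro (⟨j, hj, rfl⟩ | ⟨P, hP, rfl⟩)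
      · exact Or.inl ⟨j, hj, rfl⟩
      · exact Or.inr ⟨P, hP, rfl⟩
    · rintro (⟨j, hj, rfl⟩ | ⟨P, hP, rfl⟩)
      · exact Or.inl ⟨j, hj, rfl⟩
      · exact Or.inr ⟨P, hP, rfl⟩
  -- it is a resolving partition
  have hRes : IsResolvingPartition (G.boxProd (⊤ : SimpleGraph (Fin n))) ↑(cols ∪ rows) := by
    constructor
    · constructor
      · -- empty set not a part
        intro h
        rw [Finset.mem_coe, hmemQ] at h
        rcases h with ⟨j, _, hj⟩ | ⟨P, hP, hPeq⟩
        · exact absurd hj.symm (Set.Nonempty.ne_empty ⟨(v₀, j), by simp⟩)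
        · obtain ⟨x, hx⟩ := hPne P hP
          exact absurd hPeq.symm (Set.Nonempty.ne_empty ⟨(x, z), hx, rfl⟩)
      · -- each vertex in exactly one part
        rintro ⟨u, a⟩
        by_cases ha : a = z
        · obtain ⟨P, ⟨hP, huP⟩, huniq⟩ := hPart.2 u
          refine ⟨P ×ˢ {z}, ⟨by rw [Finset.mem_coe, hmemQ]; exact Or.inr ⟨P, by exact_mod_cast hP, rfl⟩,
            ⟨huP, ha⟩⟩, ?_⟩
          rintro S ⟨hS, hmem⟩
          rw [Finset.mem_coe, hmemQ] at hS
          rcases hS with ⟨j, hj, rfl⟩ | ⟨Q, hQ, rfl⟩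
          · have haj : a = j := hmem.2
            exact absurd (haj.symm.trans ha) hj
          · have := huniq Q ⟨by exact_mod_cast hQ, hmem.1⟩
            rw [this]
        · refine ⟨Set.univ ×ˢ {a}, ⟨by rw [Finset.mem_coe, hmemQ]; exact Or.inl ⟨a, ha, rfl⟩,
            by simp⟩, ?_⟩
          rintro S ⟨hS, hmem⟩
          rw [Finset.mem_coe, hmemQ] at hS
          rcases hS with ⟨j, hj, rfl⟩ | ⟨Q, hQ, rfl⟩
          · have : a = j := hmem.2
            rw [this]
          · exact absurd hmem.2 ha
    · -- resolving
      rintro ⟨u, a⟩ ⟨v, b⟩ hne'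
      by_cases hab : a = b
      · subst hab
        have huv : u ≠ v := fun h => hne' (by rw [h])
        obtain ⟨P, hP, hPne'⟩ := hres u v huv
        refine ⟨P ×ˢ {z}, by rw [Finset.mem_coe, hmemQ]; exact Or.inr ⟨P, by exact_mod_cast hP, rfl⟩, ?_⟩
        rw [aux_row G hG u a z P (hPne P (by exact_mod_cast hP)),
          aux_row G hG v a z P (hPne P (by exact_mod_cast hP))]
        omega
      · by_cases h : a = z
        · have hbz : b ≠ z := fun hb => hab (h.trans hb.symm)
          refine ⟨Set.univ ×ˢ {b}, by rw [Finset.mem_coe, hmemQ]; exact Or.inl ⟨b, hbz, rfl⟩, ?_⟩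
          rw [aux_col G hG u a b, aux_col G hG v b b, if_neg hab, if_pos rfl]
          exact one_ne_zero
        · refine ⟨Set.univ ×ˢ {a}, by rw [Finset.mem_coe, hmemQ]; exact Or.inl ⟨a, h, rfl⟩, ?_⟩
          rw [aux_col G hG u a a, aux_col G hG v b a, if_pos rfl,
            if_neg (fun e => hab e.symm)]
          exact zero_ne_one
  -- conclude
  calc partitionDim (G.boxProd (⊤ : SimpleGraph (Fin n)))
      ≤ (cols ∪ rows).card := Nat.sInf_le ⟨cols ∪ rows, rfl, hRes⟩
    _ = (n - 1) + Pi.card := hcardQ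
    _ = partitionDim G + (n - 1) := by
        rw [hcard]; unfold partitionDim; exact Nat.add_comm _ _
end
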